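/- The clique number of the non-cyclic graph of the alternating group A_5 equals 31. In particular, taking the 15 non-trivial elements of all five Sylow 2-subgroups together with one generator from each of the ten Sylow 3-subgroups and each of the six Sylow 5-subgroups yields a set of 31 elements any two of which generate a non-cyclic subgroup, and no clique is larger since A_5 is the union of 31 maximal cyclic subgroups. -/

import Mathlib

/-- The cyclicizer of a group: elements generating a cyclic subgroup with every element. -/
def cyclicizer (G : Type*) [Group G] : Set G :=
  {x | ∀ y : G, IsCyclic (Subgroup.closure {x, y} : Subgroup G)}

/-- The relative cyclicizer of an element. -/
def relCyclicizer {G : Type*} [Group G] (x : G) : Set G :=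
  {g | IsCyclic (Subgroup.closure {g, x} : Subgroup G)}

/-- A group is locally cyclic if every finitely generated subgroup is cyclic. -/
def IsLocallyCyclic (G : Type*) [Group G] : Prop :=
  ∀ H : Subgroup G, H.FG → IsCyclic H

/-- The non-cyclic graph of a group. -/
def noncyclicGraph (G : Type*) [Group G] :
    SimpleGraph {g : G // g ∉ cyclicizer G} where
  Adj x y := x ≠ y ∧ ¬ IsCyclic (Subgroup.closure {(x : G), (y : G)} : Subgroup G)
  symm := ⟨fun x y h => ⟨h.1.symm, by rw [Set.pair_comm]; exact h.2⟩⟩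
  loopless := ⟨fun x h => h.1 rfl⟩

/-- The cyclic graph of a group (complement of the non-cyclic graph). -/
def cyclicGraph (G : Type*) [Group G] :
    SimpleGraph {g : G // g ∉ cyclicizer G} where
  Adj x y := x ≠ y ∧ IsCyclic (Subgroup.closure {(x : G), (y : G)} : Subgroup G)
  symm := ⟨fun x y h => ⟨h.1.symm, by rw [Set.pair_comm]; exact h.2⟩⟩
  loopless := ⟨fun x h => h.1 rfl⟩

/-- A graph has clique number `n` if it has a clique of size `n` and no larger clique. -/
def hasCliqueNum {V : Type*} (Γ : SimpleGraph V) (n : ℕ) : Prop :=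
  (∃ s : Finset V, Γ.IsNClique n s) ∧ ∀ s : Finset V, Γ.IsClique (s : Set V) → s.card ≤ n

abbrev G5 := alternatingGroup (Fin 5)

lemma zpowers_isCyclic {G : Type*} [Group G] (g : G) :
    IsCyclic (Subgroup.zpowers g) := by
  refine ⟨⟨⟨g, Subgroup.mem_zpowers g⟩, ?_⟩⟩
  rintro ⟨x, hx⟩
  obtain ⟨k, rfl⟩ := hx
  exact ⟨k, by ext; simp⟩

lemma isCyclic_closure_of_mem_zpowers {G : Type*} [Group G] {x y g : G}
    (hx : x ∈ Subgroup.zpowers g) (hy : y ∈ Subgroup.zpowers g) :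
    IsCyclic (Subgroup.closure {x, y} : Subgroup G) := by
  haveI := zpowers_isCyclic g
  exact Subgroup.isCyclic_of_le (Subgroup.closure_le _ |>.2
    (by rintro z (rfl | rfl) <;> simpa))

lemma one_mem_cyclicizer (G : Type*) [Group G] : (1 : G) ∈ cyclicizer G :=
  fun y => isCyclic_closure_of_mem_zpowers (Subgroup.one_mem _) (Subgroup.mem_zpowers y)

lemma commute_of_isCyclic_closure {G : Type*} [Group G] {x y : G}
    (h : IsCyclic (Subgroup.closure {x, y} : Subgroup G)) : Commute x y := by
  obtain ⟨g, hg⟩ := h.exists_generator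
  have hx : x ∈ Subgroup.closure ({x, y} : Set G) :=
    Subgroup.subset_closure (by simp)
  have hy : y ∈ Subgroup.closure ({x, y} : Set G) :=
    Subgroup.subset_closure (by simp)
  obtain ⟨m, hm⟩ := hg ⟨x, hx⟩
  obtain ⟨n, hn⟩ := hg ⟨y, hy⟩
  have hm' : ((g : G)) ^ m = x := by
    have := congrArg Subtype.val hm; simpa using this
  have hn' : ((g : G)) ^ n = y := by
    have := congrArg Subtype.val hn; simpa using this
  have key : ∀ c : G, c ^ m = x → c ^ n = y → x * y = y * x := by
    intro c hcm hcn
    rw [← hcm, ← hcn]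
    exact (Commute.refl c).zpow_zpow m n
  exact key _ hm' hn'

lemma noncyclic_of_not_commute {G : Type*} [Group G] {x y : G}
    (h : ¬ Commute x y) : ¬ IsCyclic (Subgroup.closure {x, y} : Subgroup G) :=
  fun hc => h (commute_of_isCyclic_closure hc)

lemma noncyclic_of_two_involutions {G : Type*} [Group G] [Finite G] {x y : G}
    (hx2 : x ^ 2 = 1) (hy2 : y ^ 2 = 1) (hx1 : x ≠ 1) (hy1 : y ≠ 1) (hxy : x ≠ y) :
    ¬ IsCyclic (Subgroup.closure {x, y} : Subgroup G) := by
  intro h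
  classical
  set H := (Subgroup.closure {x, y} : Subgroup G) with hH
  haveI : Fintype H := Fintype.ofFinite H
  have hxm : x ∈ H := Subgroup.subset_closure (by simp)
  have hym : y ∈ H := Subgroup.subset_closure (by simp)
  have hle := @IsCyclic.card_pow_eq_one_le H _ _ _ h 2 (by norm_num)
  rw [show ({a : H | a ^ 2 = 1} : Finset H) =
      Finset.univ.filter (fun a : H => a ^ 2 = 1) from Finset.filter_congr_decidable ..] at hle
  have hsub : ({⟨x, hxm⟩, ⟨y, hym⟩, 1} : Finset H) ⊆
      Finset.univ.filter (fun a : H => a ^ 2 = 1) := by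
    intro a ha
    simp only [Finset.mem_insert, Finset.mem_singleton] at ha
    rcases ha with rfl | rfl | rfl <;>
      · simp only [Finset.mem_filter, Finset.mem_univ, true_and]
        exact Subtype.ext (by simpa)
  have h3 : ({⟨x, hxm⟩, ⟨y, hym⟩, 1} : Finset H).card = 3 := by
    rw [Finset.card_insert_of_notMem, Finset.card_insert_of_notMem, Finset.card_singleton]
    · simp only [Finset.mem_singleton]
      exact fun he => hy1 (congrArg Subtype.val he)
    · simp only [Finset.mem_insert, Finset.mem_singleton]
      push_neg
      exact ⟨fun he => hxy (congrArg Subtype.val he),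
             fun he => hx1 (congrArg Subtype.val he)⟩
  have := Finset.card_le_card hsub
  omega

def pa (σ : Equiv.Perm (Fin 5)) (h : σ ∈ alternatingGroup (Fin 5) := by rw [Equiv.Perm.mem_alternatingGroup]; decide) : G5 :=
  ⟨σ, h⟩

def L : Finset G5 :=
  {pa (List.formPerm [0,1] * List.formPerm [2,3]),
   pa (List.formPerm [0,1] * List.formPerm [2,4]),
   pa (List.formPerm [0,1] * List.formPerm [3,4]),
   pa (List.formPerm [0,2] * List.formPerm [1,3]),
   pa (List.formPerm [0,2] * List.formPerm [1,4]),
   pa (List.formPerm [0,2] * List.formPerm [3,4]),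
   pa (List.formPerm [0,3] * List.formPerm [1,2]),
   pa (List.formPerm [0,3] * List.formPerm [1,4]),
   pa (List.formPerm [0,3] * List.formPerm [2,4]),
   pa (List.formPerm [0,4] * List.formPerm [1,2]),
   pa (List.formPerm [0,4] * List.formPerm [1,3]),
   pa (List.formPerm [0,4] * List.formPerm [2,3]),
   pa (List.formPerm [1,2] * List.formPerm [3,4]),
   pa (List.formPerm [1,3] * List.formPerm [2,4]),
   pa (List.formPerm [1,4] * List.formPerm [2,3]),
   pa (List.formPerm [0,1,2]),
   pa (List.formPerm [0,1,3]),
   pa (List.formPerm [0,1,4]),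
   pa (List.formPerm [0,2,3]),
   pa (List.formPerm [0,2,4]),
   pa (List.formPerm [0,3,4]),
   pa (List.formPerm [1,2,3]),
   pa (List.formPerm [1,2,4]),
   pa (List.formPerm [1,3,4]),
   pa (List.formPerm [2,3,4]),
   pa (List.formPerm [0,1,2,3,4]),
   pa (List.formPerm [0,1,2,4,3]),
   pa (List.formPerm [0,1,3,2,4]),
   pa (List.formPerm [0,1,3,4,2]),
   pa (List.formPerm [0,1,4,2,3]),
   pa (List.formPerm [0,1,4,3,2])}

set_option maxRecDepth 20000 in
lemma L_card : L.card = 31 := by decide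

set_option maxRecDepth 20000 in
set_option maxHeartbeats 4000000 in
lemma L_pairwise : ∀ x ∈ L, ∀ y ∈ L, x ≠ y →
    (x * y ≠ y * x ∨ (x ^ 2 = 1 ∧ y ^ 2 = 1)) := by decide

set_option maxRecDepth 20000 in
lemma L_ne_one : ∀ x ∈ L, x ≠ 1 := by decide

set_option maxRecDepth 20000 in
set_option maxHeartbeats 4000000 in
lemma L_noncentral : ∀ x ∈ L, ∃ y ∈ L, x * y ≠ y * x := by decide

set_option maxRecDepth 20000 in
set_option maxHeartbeats 4000000 in
lemma T_card : ((Finset.univ.filter (fun g : G5 => g ≠ 1)).image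
    (fun x => ({x, x ^ 2, x ^ 3, x ^ 4, 1} : Finset G5))).card = 31 := by decide

lemma L_not_mem_cyclicizer : ∀ x ∈ L, x ∉ cyclicizer G5 := by
  intro x hx hcyc
  obtain ⟨y, _, hcomm⟩ := L_noncentral x hx
  exact hcomm (commute_of_isCyclic_closure (hcyc y))

def emb : {x // x ∈ L} ↪ {g : G5 // g ∉ cyclicizer G5} :=
  ⟨fun x => ⟨x.1, L_not_mem_cyclicizer x.1 x.2⟩,
   fun a b hab => by
     apply Subtype.ext
     have := congrArg Subtype.val hab
     simpa using this⟩

set_option maxRecDepth 20000 in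
set_option maxHeartbeats 2000000 in
theorem cliqueNum_noncyclicGraph_alternatingGroup_five :
    hasCliqueNum (noncyclicGraph (alternatingGroup (Fin 5))) 31 := by
  constructor
  · -- existence of a 31-clique
    refine ⟨L.attach.map emb, ?_, ?_⟩
    · -- clique
      intro a ha b hb hne
      simp only [Finset.coe_map, Set.mem_image, Finset.mem_coe, Finset.mem_attach,
        Function.Embedding.coeFn_mk] at ha hb
      obtain ⟨⟨x, hxL⟩, -, rfl⟩ := ha
      obtain ⟨⟨y, hyL⟩, -, rfl⟩ := hb
      have hxy : x ≠ y := fun h => hne (by subst h; rfl)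
      refine ⟨hne, ?_⟩
      rcases L_pairwise x hxL y hyL hxy with h | ⟨h1, h2⟩
      · exact noncyclic_of_not_commute h
      · exact noncyclic_of_two_involutions h1 h2 (L_ne_one x hxL) (L_ne_one y hyL) hxy
    · rw [Finset.card_map, Finset.card_attach, L_card]
  · -- upper bound
    intro s hs
    classical
    have hmap : ∀ x ∈ s, (fun x : {g : G5 // g ∉ cyclicizer G5} =>
        ({x.1, x.1 ^ 2, x.1 ^ 3, x.1 ^ 4, 1} : Finset G5)) x ∈
        ((Finset.univ.filter (fun g : G5 => g ≠ 1)).image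
          (fun x => ({x, x ^ 2, x ^ 3, x ^ 4, 1} : Finset G5))) := by
      intro x _
      refine Finset.mem_image.2 ⟨x.1, Finset.mem_filter.2 ⟨Finset.mem_univ _, ?_⟩, rfl⟩
      intro h1
      exact x.2 (h1 ▸ one_mem_cyclicizer G5)
    have hinj : Set.InjOn (fun x : {g : G5 // g ∉ cyclicizer G5} =>
        ({x.1, x.1 ^ 2, x.1 ^ 3, x.1 ^ 4, 1} : Finset G5)) s := by
      intro x hx y hy heq
      by_contra hne
      have hadj := hs (Finset.mem_coe.2 hx) (Finset.mem_coe.2 hy) hne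
      apply hadj.2
      replace heq : ({x.1, x.1 ^ 2, x.1 ^ 3, x.1 ^ 4, 1} : Finset G5) =
          ({y.1, y.1 ^ 2, y.1 ^ 3, y.1 ^ 4, 1} : Finset G5) := heq
      have hymem : y.1 ∈ ({x.1, x.1 ^ 2, x.1 ^ 3, x.1 ^ 4, 1} : Finset G5) := by
        rw [heq]; exact Finset.mem_insert_self _ _
      have hyzp : y.1 ∈ Subgroup.zpowers x.1 := by
        simp only [Finset.mem_insert, Finset.mem_singleton] at hymem
        rcases hymem with h | h | h | h | h
        · rw [h]; exact Subgroup.mem_zpowers _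
        · rw [h]; exact (Subgroup.zpowers x.1).pow_mem (Subgroup.mem_zpowers x.1) 2
        · rw [h]; exact (Subgroup.zpowers x.1).pow_mem (Subgroup.mem_zpowers x.1) 3
        · rw [h]; exact (Subgroup.zpowers x.1).pow_mem (Subgroup.mem_zpowers x.1) 4
        · rw [h]; exact Subgroup.one_mem _
      exact isCyclic_closure_of_mem_zpowers (Subgroup.mem_zpowers x.1) hyzp
    calc s.card ≤ ((Finset.univ.filter (fun g : G5 => g ≠ 1)).image
        (fun x => ({x, x ^ 2, x ^ 3, x ^ 4, 1} : Finset G5))).card :=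
      Finset.card_le_card_of_injOn _ hmap hinj
    _ = 31 := T_card
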